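/- Let (X_i)_{1≤i≤n} be a sequence of supermartingale differences adapted to a filtration (F_i). If there exist constants R > 0 and K > 0 such that for all i, almost surely E[exp(R X_i²) | F_{i-1}] ≤ K, then there exists a constant c > 0, depending only on R and K, such that E[exp(t S_n)] ≤ exp(n c t²) for all t > 0, and P[S_n/n > x] ≤ exp(−n x²/(4c)) for all x > 0. Conversely, if (X_i) are i.i.d. and P[S_n/n > x] ≤ exp(−n x²/(4c)) holds for some n ≥ 1, c > 0 and all x > 0, then for each R ∈ (0, 1/(4c)), E[exp(R (X_1^+)²)] ≤ 1 + R/(1/(4c) − R), where X_1^+ = max(X_1, 0). -/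

import Mathlib

open MeasureTheory ProbabilityTheory Filter

section helpers
open Real

lemma exp_le_aux (u : ℝ) : Real.exp u ≤ 1 + u + 2 * u ^ 2 * Real.exp (u ^ 2) := by
  have h1 : (1 : ℝ) ≤ Real.exp (u ^ 2) := by
    rw [Real.one_le_exp_iff]; positivity
  rcases le_or_gt |u| 1 with h | h
  · have hb := Real.exp_bound h (n := 2) (by norm_num)
    have hs : ∑ i ∈ Finset.range 2, u ^ i / (i.factorial : ℝ) = 1 + u := by
      simp [Finset.sum_range_succ]
    rw [hs] at hb
    have h2 : Real.exp u - (1 + u) ≤ |u| ^ 2 * ((2 + 1 : ℕ) / ((2:ℕ).factorial * 2) : ℝ) :=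
      (le_abs_self _).trans hb
    have h3 : ((2 + 1 : ℕ) / ((2:ℕ).factorial * 2) : ℝ) = 3 / 4 := by norm_num [Nat.factorial]
    rw [h3] at h2
    have h4 : |u| ^ 2 = u ^ 2 := sq_abs u
    nlinarith [sq_nonneg u]
  · have hu2 : (1 : ℝ) ≤ u ^ 2 := by nlinarith [abs_nonneg u, sq_abs u]
    have h3 : Real.exp u ≤ Real.exp (u ^ 2) := by
      apply Real.exp_le_exp.2
      nlinarith [le_abs_self u, sq_abs u]
    nlinarith [neg_abs_le u, sq_abs u]



lemma exp_mul_le {R : ℝ} (t x : ℝ) (hR : 0 < R) :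
    Real.exp (t * x) ≤ Real.exp (t ^ 2 / (4 * R)) * Real.exp (R * x ^ 2) := by
  rw [← Real.exp_add]
  apply Real.exp_le_exp.2
  have key : t ^ 2 / (4 * R) + R * x ^ 2 - t * x = (t - 2 * R * x) ^ 2 / (4 * R) := by
    field_simp; ring
  have h2 : (0:ℝ) ≤ (t - 2 * R * x) ^ 2 / (4 * R) := by positivity
  linarith

lemma integrable_exp_mul {Ω : Type*} {m0 : MeasurableSpace Ω} {μ : Measure Ω}
    {f : Ω → ℝ} {R t : ℝ} (hR : 0 < R)
    (hf : AEStronglyMeasurable f μ)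
    (hfe : Integrable (fun ω => Real.exp (R * f ω ^ 2)) μ) :
    Integrable (fun ω => Real.exp (t * f ω)) μ := by
  apply Integrable.mono' (hfe.const_mul (Real.exp (t ^ 2 / (4 * R))))
  · exact (Real.continuous_exp.comp_aestronglyMeasurable (hf.const_mul t))
  · exact ae_of_all _ fun ω => by
      rw [Real.norm_eq_abs, abs_of_pos (Real.exp_pos _)]
      exact exp_mul_le t (f ω) hR

lemma step_bound {Ω : Type*} {m0 : MeasurableSpace Ω} {μ : Measure Ω} [IsProbabilityMeasure μ]
    {m : MeasurableSpace Ω} (hm : m ≤ m0) {f : Ω → ℝ} {R K t : ℝ} (hR : 0 < R) (ht : 0 < t)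
    (hf : Integrable f μ) (hfe : Integrable (fun ω => Real.exp (R * f ω ^ 2)) μ)
    (hcond : ∀ᵐ ω ∂μ, (μ[f|m]) ω ≤ 0)
    (hcondK : ∀ᵐ ω ∂μ, (μ[fun ω' => Real.exp (R * f ω' ^ 2)|m]) ω ≤ K) :
    ∀ᵐ ω ∂μ, (μ[fun ω' => Real.exp (t * f ω')|m]) ω ≤
      Real.exp ((6 * max K 1 + 1) / R * t ^ 2) := by
  set K' : ℝ := max K 1 with hK'
  have hK1 : (1 : ℝ) ≤ K' := le_max_right _ _
  have hKK : K ≤ K' := le_max_left _ _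
  have hint : Integrable (fun ω => Real.exp (t * f ω)) μ := integrable_exp_mul hR hf.1 hfe
  rcases le_or_gt (t ^ 2) (R / 2) with hsmall | hbig
  · -- small t
    set g2 : Ω → ℝ :=
      (fun _ => (1:ℝ)) + (t • f + (4 * t ^ 2 / R) • (fun ω => Real.exp (R * f ω ^ 2)))
      with hg2
    have hg2i : Integrable g2 μ :=
      (integrable_const 1).add ((hf.smul t).add (hfe.smul (4 * t ^ 2 / R)))
    have hpt : (fun ω => Real.exp (t * f ω)) ≤ᵐ[μ] g2 := by
      refine ae_of_all _ fun ω => ?_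
      have h0 := exp_le_aux (t * f ω)
      set x := f ω with hx
      have h1 : R / 2 * x ^ 2 ≤ Real.exp (R / 2 * x ^ 2) := by
        have := Real.add_one_le_exp (R / 2 * x ^ 2); linarith
      have hx2 : x ^ 2 ≤ 2 / R * Real.exp (R / 2 * x ^ 2) := by
        have h2 := mul_le_mul_of_nonneg_left h1 (le_of_lt (by positivity : (0:ℝ) < 2 / R))
        calc x ^ 2 = 2 / R * (R / 2 * x ^ 2) := by field_simp
          _ ≤ 2 / R * Real.exp (R / 2 * x ^ 2) := h2
      have hee : Real.exp ((t * x) ^ 2) ≤ Real.exp (R / 2 * x ^ 2) := by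
        apply Real.exp_le_exp.2
        calc (t * x) ^ 2 = t ^ 2 * x ^ 2 := by ring
          _ ≤ R / 2 * x ^ 2 := mul_le_mul_of_nonneg_right hsmall (sq_nonneg x)
      have hprod : x ^ 2 * Real.exp ((t * x) ^ 2) ≤
          (2 / R * Real.exp (R / 2 * x ^ 2)) * Real.exp (R / 2 * x ^ 2) :=
        mul_le_mul hx2 hee (Real.exp_pos _).le (by positivity)
      have heq : (2 / R * Real.exp (R / 2 * x ^ 2)) * Real.exp (R / 2 * x ^ 2)
          = 2 / R * Real.exp (R * x ^ 2) := by
        rw [mul_assoc, ← Real.exp_add]; ring_nf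
      rw [heq] at hprod
      have hfin : 2 * (t * x) ^ 2 * Real.exp ((t * x) ^ 2) ≤
          4 * t ^ 2 / R * Real.exp (R * x ^ 2) := by
        have h3 := mul_le_mul_of_nonneg_left hprod (by positivity : (0:ℝ) ≤ 2 * t ^ 2)
        calc 2 * (t * x) ^ 2 * Real.exp ((t * x) ^ 2)
            = 2 * t ^ 2 * (x ^ 2 * Real.exp ((t * x) ^ 2)) := by ring
          _ ≤ 2 * t ^ 2 * (2 / R * Real.exp (R * x ^ 2)) := h3
          _ = 4 * t ^ 2 / R * Real.exp (R * x ^ 2) := by ring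
      show Real.exp (t * x) ≤ 1 + (t * x + 4 * t ^ 2 / R * Real.exp (R * x ^ 2))
      linarith
    have e1 : μ[g2|m] =ᵐ[μ] fun ω => 1 + (t * (μ[f|m]) ω +
        (4 * t ^ 2 / R) * (μ[fun ω' => Real.exp (R * f ω' ^ 2)|m]) ω) := by
      have h₂ := condExp_add (μ := μ) (m := m) (integrable_const (1:ℝ))
        ((hf.smul t).add (hfe.smul (4 * t ^ 2 / R)))
      have h₁ := condExp_add (μ := μ) (m := m) (hf.smul t) (hfe.smul (4 * t ^ 2 / R))
      have h₃ := condExp_smul (μ := μ) (m := m) t f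
      have h₄ := condExp_smul (μ := μ) (m := m) (4 * t ^ 2 / R)
        (fun ω => Real.exp (R * f ω ^ 2))
      have h₅ := condExp_const hm (1:ℝ) (μ := μ)
      filter_upwards [h₂, h₁, h₃, h₄] with ω e2 e1' e3 e4
      rw [← hg2] at e2
      simp only [Pi.add_apply, Pi.smul_apply, smul_eq_mul] at e2 e1' e3 e4 ⊢
      rw [e2, e1', e3, e4, h₅]
    filter_upwards [condExp_mono hint hg2i hpt, e1, hcond, hcondK] with ω hmono he hc hk
    rw [he] at hmono
    have hnn : (0:ℝ) ≤ 4 * t ^ 2 / R := by positivity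
    have h5 : 4 * t ^ 2 / R * (μ[fun ω' => Real.exp (R * f ω' ^ 2)|m]) ω ≤
        (6 * K' + 1) / R * t ^ 2 := by
      calc 4 * t ^ 2 / R * (μ[fun ω' => Real.exp (R * f ω' ^ 2)|m]) ω
          ≤ 4 * t ^ 2 / R * K' := mul_le_mul_of_nonneg_left (hk.trans hKK) hnn
        _ ≤ (6 * K' + 1) / R * t ^ 2 := by
            rw [div_mul_eq_mul_div, div_mul_eq_mul_div, div_le_div_iff₀ hR hR]
            nlinarith [mul_nonneg (mul_nonneg (by linarith : (0:ℝ) ≤ 2 * K' + 1)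
              (sq_nonneg t)) hR.le]
    have h6 : t * (μ[f|m]) ω ≤ 0 := mul_nonpos_of_nonneg_of_nonpos ht.le hc
    calc (μ[fun ω' => Real.exp (t * f ω')|m]) ω ≤ _ := hmono
      _ ≤ 1 + (6 * K' + 1) / R * t ^ 2 := by linarith
      _ ≤ Real.exp ((6 * K' + 1) / R * t ^ 2) := by
          have := Real.add_one_le_exp ((6 * K' + 1) / R * t ^ 2); linarith
  · -- big t
    have hpt : (fun ω => Real.exp (t * f ω)) ≤ᵐ[μ]
        (Real.exp (t ^ 2 / (4 * R))) • (fun ω => Real.exp (R * f ω ^ 2)) :=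
      ae_of_all _ fun ω => exp_mul_le t (f ω) hR
    have hsc : ∀ z, z ≤ K → Real.exp (t ^ 2 / (4 * R)) * z ≤
        Real.exp ((6 * K' + 1) / R * t ^ 2) := by
      intro z hz
      have h2 : K ≤ Real.exp (6 * K' / R * t ^ 2) := by
        have ha : (3:ℝ) * K' ≤ 6 * K' / R * t ^ 2 := by
          have he' : 6 * K' / R * (R / 2) = 3 * K' := by field_simp; ring
          calc (3:ℝ) * K' = 6 * K' / R * (R / 2) := he'.symm
            _ ≤ 6 * K' / R * t ^ 2 := by
                apply mul_le_mul_of_nonneg_left hbig.le (by positivity)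
        calc K ≤ K' := hKK
          _ ≤ 3 * K' + 1 := by linarith
          _ ≤ Real.exp (3 * K') := Real.add_one_le_exp _
          _ ≤ Real.exp (6 * K' / R * t ^ 2) := Real.exp_le_exp.2 ha
      calc Real.exp (t ^ 2 / (4 * R)) * z ≤
          Real.exp (t ^ 2 / (4 * R)) * Real.exp (6 * K' / R * t ^ 2) :=
            mul_le_mul_of_nonneg_left (hz.trans h2) (Real.exp_pos _).le
        _ = Real.exp (t ^ 2 / (4 * R) + 6 * K' / R * t ^ 2) := (Real.exp_add _ _).symm
        _ ≤ Real.exp ((6 * K' + 1) / R * t ^ 2) := by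
            apply Real.exp_le_exp.2
            have hd : (6 * K' + 1) / R * t ^ 2 - (t ^ 2 / (4 * R) + 6 * K' / R * t ^ 2) =
                3 / 4 * t ^ 2 / R := by field_simp; ring
            nlinarith [hd, (by positivity : (0:ℝ) ≤ 3 / 4 * t ^ 2 / R)]
    have hmono := condExp_mono (m := m) hint (hfe.smul (Real.exp (t ^ 2 / (4 * R)))) hpt
    have hs := condExp_smul (μ := μ) (m := m) (Real.exp (t ^ 2 / (4 * R)))
      (fun ω => Real.exp (R * f ω ^ 2))
    filter_upwards [hmono, hs, hcondK] with ω h1 h2 h3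
    rw [h2] at h1
    simp only [Pi.smul_apply, smul_eq_mul] at h1
    exact h1.trans (hsc _ h3)


lemma iter_bound {Ω : Type*} {m0 : MeasurableSpace Ω} (μ : Measure Ω) [IsProbabilityMeasure μ]
    (ℱ : Filtration ℕ m0) (X : ℕ → Ω → ℝ) (t C : ℝ) (hC : 0 ≤ C) :
    ∀ n : ℕ, (∀ i ∈ Finset.Icc 1 n, StronglyMeasurable[ℱ i] (X i)) →
    (∀ m, m ≤ n → Integrable (fun ω => Real.exp (t * ∑ i ∈ Finset.Icc 1 m, X i ω)) μ) →
    (∀ i ∈ Finset.Icc 1 n, Integrable (fun ω => Real.exp (t * X i ω)) μ) →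
    (∀ i ∈ Finset.Icc 1 n, ∀ᵐ ω ∂μ,
      (μ[fun ω' => Real.exp (t * X i ω')|ℱ (i - 1)]) ω ≤ C) →
    ∫ ω, Real.exp (t * ∑ i ∈ Finset.Icc 1 n, X i ω) ∂μ ≤ C ^ n := by
  intro n
  induction n with
  | zero =>
    intro _ _ _ _
    simp
  | succ n ih =>
    intro hmeas hint hint1 hstep
    have hsub : ∀ i, i ∈ Finset.Icc 1 n → i ∈ Finset.Icc 1 (n + 1) := by
      intro i hi; simp only [Finset.mem_Icc] at *; omega
    have hin : n + 1 ∈ Finset.Icc 1 (n + 1) := by simp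
    set F : Ω → ℝ := fun ω => Real.exp (t * ∑ i ∈ Finset.Icc 1 n, X i ω) with hF
    set G : Ω → ℝ := fun ω => Real.exp (t * X (n + 1) ω) with hG
    have hFG : (fun ω => Real.exp (t * ∑ i ∈ Finset.Icc 1 (n + 1), X i ω)) = F * G := by
      funext ω
      rw [Finset.sum_Icc_succ_top (by omega : 1 ≤ n + 1)]
      simp only [Pi.mul_apply, hF, hG, ← Real.exp_add]
      ring_nf
    have hFmeas : StronglyMeasurable[ℱ n] F := by
      apply Real.continuous_exp.comp_stronglyMeasurable
      apply StronglyMeasurable.const_mul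
      apply Finset.stronglyMeasurable_fun_sum
      intro i hi
      exact (hmeas i (hsub i hi)).mono (ℱ.mono (by simp only [Finset.mem_Icc] at hi; omega))
    have hFint : Integrable F μ := hint n (by omega)
    have hGint : Integrable G μ := hint1 (n + 1) hin
    have hFGint : Integrable (F * G) μ := by rw [← hFG]; exact hint (n + 1) le_rfl
    have hpull := condExp_mul_of_stronglyMeasurable_left (μ := μ) hFmeas hFGint hGint
    have hcondG : ∀ᵐ ω ∂μ, 0 ≤ (μ[G|ℱ n]) ω ∧ (μ[G|ℱ n]) ω ≤ C := by
      have h0 : (0 : Ω → ℝ) ≤ᵐ[μ] G := ae_of_all _ fun ω => (Real.exp_pos _).le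
      have h1 := condExp_nonneg (μ := μ) (m := ℱ n) h0
      have h2 := hstep (n + 1) hin
      simp only [Nat.add_sub_cancel] at h2
      filter_upwards [h1, h2] with ω ha hb
      exact ⟨ha, hb⟩
    have hmeasC : AEStronglyMeasurable (fun ω => F ω * (μ[G|ℱ n]) ω) μ :=
      hFint.1.mul ((stronglyMeasurable_condExp.mono (ℱ.le n)).aestronglyMeasurable)
    have hintC : Integrable (fun ω => F ω * (μ[G|ℱ n]) ω) μ := by
      apply Integrable.mono' (hFint.const_mul C) hmeasC
      filter_upwards [hcondG] with ω ⟨h1, h2⟩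
      rw [Real.norm_eq_abs, abs_mul, abs_of_pos (Real.exp_pos _),
        abs_of_nonneg h1, mul_comm C (F ω)]
      exact mul_le_mul_of_nonneg_left h2 (Real.exp_pos _).le
    calc ∫ ω, Real.exp (t * ∑ i ∈ Finset.Icc 1 (n + 1), X i ω) ∂μ
        = ∫ ω, (F * G) ω ∂μ := by rw [hFG]
      _ = ∫ ω, (μ[F * G|ℱ n]) ω ∂μ := (integral_condExp (ℱ.le n)).symm
      _ = ∫ ω, F ω * (μ[G|ℱ n]) ω ∂μ := integral_congr_ae hpull
      _ ≤ ∫ ω, C * F ω ∂μ := by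
          apply integral_mono_ae hintC (hFint.const_mul C)
          filter_upwards [hcondG] with ω ⟨h1, h2⟩
          rw [mul_comm C (F ω)]
          exact mul_le_mul_of_nonneg_left h2 (Real.exp_pos _).le
      _ = C * ∫ ω, F ω ∂μ := integral_const_mul C F
      _ ≤ C * C ^ n := by
          apply mul_le_mul_of_nonneg_left _ hC
          exact ih (fun i hi => hmeas i (hsub i hi)) (fun m hm => hint m (by omega))
            (fun i hi => hint1 i (hsub i hi)) (fun i hi => hstep i (hsub i hi))
      _ = C ^ (n + 1) := by ring


lemma quarter_bound {R : ℝ} (hR : 0 < R) (t x : ℝ) : t * x ≤ t ^ 2 / (4 * R) + R * x ^ 2 := by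
  have key : t ^ 2 / (4 * R) + R * x ^ 2 - t * x = (t - 2 * R * x) ^ 2 / (4 * R) := by
    field_simp; ring
  have h2 : (0:ℝ) ≤ (t - 2 * R * x) ^ 2 / (4 * R) := by positivity
  linarith

lemma integrable_exp_sum {Ω : Type*} {m0 : MeasurableSpace Ω} (μ : Measure Ω)
    [IsProbabilityMeasure μ] (X : ℕ → Ω → ℝ) {R : ℝ} (t : ℝ) (hR : 0 < R) {n : ℕ} (hn : 1 ≤ n)
    (hmeas : ∀ i ∈ Finset.Icc 1 n, AEStronglyMeasurable (X i) μ)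
    (hfe : ∀ i ∈ Finset.Icc 1 n, Integrable (fun ω => Real.exp (R * X i ω ^ 2)) μ) :
    ∀ m, m ≤ n → Integrable (fun ω => Real.exp (t * ∑ i ∈ Finset.Icc 1 m, X i ω)) μ := by
  intro m hmn
  set R' : ℝ := R / n with hR'
  have hR'pos : 0 < R' := by positivity
  have hnR : (0:ℝ) < n := by exact_mod_cast hn
  apply Integrable.mono'
    ((integrable_finset_sum _ (fun i hi => (hfe i hi).const_mul ((1:ℝ)/n))).const_mul
      (Real.exp ((m : ℝ) * (t ^ 2 / (4 * R')))))
  · apply Real.continuous_exp.comp_aestronglyMeasurable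
    exact (Finset.aestronglyMeasurable_fun_sum _ fun i hi =>
      hmeas i (Finset.Icc_subset_Icc_right hmn hi)).const_mul t
  · refine ae_of_all _ fun ω => ?_
    rw [Real.norm_eq_abs, abs_of_pos (Real.exp_pos _)]
    have h1 : t * ∑ i ∈ Finset.Icc 1 m, X i ω ≤
        (m : ℝ) * (t ^ 2 / (4 * R')) + ∑ i ∈ Finset.Icc 1 n, R' * X i ω ^ 2 := by
      calc t * ∑ i ∈ Finset.Icc 1 m, X i ω = ∑ i ∈ Finset.Icc 1 m, t * X i ω :=
            Finset.mul_sum _ _ _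
        _ ≤ ∑ i ∈ Finset.Icc 1 m, (t ^ 2 / (4 * R') + R' * X i ω ^ 2) :=
            Finset.sum_le_sum fun i _ => quarter_bound hR'pos t (X i ω)
        _ = (m : ℝ) * (t ^ 2 / (4 * R')) + ∑ i ∈ Finset.Icc 1 m, R' * X i ω ^ 2 := by
            rw [Finset.sum_add_distrib, Finset.sum_const, Nat.card_Icc]
            simp [nsmul_eq_mul]
        _ ≤ (m : ℝ) * (t ^ 2 / (4 * R')) + ∑ i ∈ Finset.Icc 1 n, R' * X i ω ^ 2 := by
            apply add_le_add_right
            exact Finset.sum_le_sum_of_subset_of_nonneg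
              (Finset.Icc_subset_Icc_right hmn) (fun i _ _ => by positivity)
    have h2 : Real.exp (∑ i ∈ Finset.Icc 1 n, R' * X i ω ^ 2) ≤
        ∑ i ∈ Finset.Icc 1 n, (1 : ℝ) / n * Real.exp (R * X i ω ^ 2) := by
      rw [Real.exp_sum]
      have hgm := Real.geom_mean_le_arith_mean_weighted (Finset.Icc 1 n)
        (fun _ => (1:ℝ)/n) (fun i => Real.exp (R * X i ω ^ 2))
        (fun i _ => by positivity)
        (by rw [Finset.sum_const, Nat.card_Icc]; simp [nsmul_eq_mul]; field_simp)
        (fun i _ => (Real.exp_pos _).le)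
      calc ∏ i ∈ Finset.Icc 1 n, Real.exp (R' * X i ω ^ 2)
          = ∏ i ∈ Finset.Icc 1 n, Real.exp (R * X i ω ^ 2) ^ ((1:ℝ)/n) := by
            apply Finset.prod_congr rfl
            intro i _
            rw [← Real.exp_mul]
            congr 1
            rw [hR']; ring
        _ ≤ ∑ i ∈ Finset.Icc 1 n, (1 : ℝ) / n * Real.exp (R * X i ω ^ 2) := hgm
    calc Real.exp (t * ∑ i ∈ Finset.Icc 1 m, X i ω)
        ≤ Real.exp ((m : ℝ) * (t ^ 2 / (4 * R')) + ∑ i ∈ Finset.Icc 1 n, R' * X i ω ^ 2) :=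
          Real.exp_le_exp.2 h1
      _ = Real.exp ((m : ℝ) * (t ^ 2 / (4 * R'))) *
          Real.exp (∑ i ∈ Finset.Icc 1 n, R' * X i ω ^ 2) := Real.exp_add _ _
      _ ≤ Real.exp ((m : ℝ) * (t ^ 2 / (4 * R'))) *
          ∑ i ∈ Finset.Icc 1 n, (1 : ℝ) / n * Real.exp (R * X i ω ^ 2) :=
          mul_le_mul_of_nonneg_left h2 (Real.exp_pos _).le

lemma part1 : (∀ R K : ℝ, 0 < R → 0 < K →
      ∃ c : ℝ, 0 < c ∧
        ∀ {Ω : Type*} {m0 : MeasurableSpace Ω} (μ : Measure Ω), IsProbabilityMeasure μ →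
        ∀ (ℱ : Filtration ℕ m0) (n : ℕ) (X : ℕ → Ω → ℝ), 1 ≤ n →
          (∀ i ∈ Finset.Icc 1 n, StronglyMeasurable[ℱ i] (X i)) →
          (∀ i ∈ Finset.Icc 1 n, Integrable (X i) μ) →
          (∀ i ∈ Finset.Icc 1 n, ∀ᵐ ω ∂μ, (μ[X i|ℱ (i - 1)]) ω ≤ 0) →
          (∀ i ∈ Finset.Icc 1 n,
            Integrable (fun ω => Real.exp (R * (X i ω) ^ 2)) μ) →
          (∀ i ∈ Finset.Icc 1 n,
            ∀ᵐ ω ∂μ, (μ[fun ω' => Real.exp (R * (X i ω') ^ 2)|ℱ (i - 1)]) ω ≤ K) →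
          (∀ t : ℝ, 0 < t →
            (∫⁻ ω, ENNReal.ofReal (Real.exp (t * ∑ i ∈ Finset.Icc 1 n, X i ω)) ∂μ) ≤
              ENNReal.ofReal (Real.exp (n * c * t ^ 2))) ∧
          (∀ x : ℝ, 0 < x →
            μ {ω | (∑ i ∈ Finset.Icc 1 n, X i ω) / n > x} ≤
              ENNReal.ofReal (Real.exp (-(n * x ^ 2 / (4 * c)))))) := by
  intro R K hR hK
  have hc : (0:ℝ) < (6 * max K 1 + 1) / R := by positivity
  refine ⟨(6 * max K 1 + 1) / R, hc, ?_⟩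
  set c : ℝ := (6 * max K 1 + 1) / R with hcdef
  intro Ω m0 μ hprob ℱ n X hn hmeas hint hcond hfe hcondK
  have hintm : ∀ t : ℝ, ∀ m, m ≤ n →
      Integrable (fun ω => Real.exp (t * ∑ i ∈ Finset.Icc 1 m, X i ω)) μ :=
    fun t => integrable_exp_sum μ X t hR hn
      (fun i hi => ((hmeas i hi).mono (ℱ.le i)).aestronglyMeasurable) hfe
  have hint1 : ∀ t : ℝ, ∀ i ∈ Finset.Icc 1 n,
      Integrable (fun ω => Real.exp (t * X i ω)) μ :=
    fun t i hi => integrable_exp_mul hR (hint i hi).1 (hfe i hi)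
  have hmgf : ∀ t : ℝ, 0 < t →
      ∫ ω, Real.exp (t * ∑ i ∈ Finset.Icc 1 n, X i ω) ∂μ ≤ Real.exp (n * c * t ^ 2) := by
    intro t ht
    have hstep : ∀ i ∈ Finset.Icc 1 n, ∀ᵐ ω ∂μ,
        (μ[fun ω' => Real.exp (t * X i ω')|ℱ (i - 1)]) ω ≤ Real.exp (c * t ^ 2) :=
      fun i hi =>
        step_bound (ℱ.le (i - 1)) hR ht (hint i hi) (hfe i hi) (hcond i hi) (hcondK i hi)
    have hib := iter_bound μ ℱ X t (Real.exp (c * t ^ 2)) (Real.exp_pos _).le n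
      hmeas (hintm t) (hint1 t) hstep
    calc ∫ ω, Real.exp (t * ∑ i ∈ Finset.Icc 1 n, X i ω) ∂μ
        ≤ (Real.exp (c * t ^ 2)) ^ n := hib
      _ = Real.exp (n * c * t ^ 2) := by rw [← Real.exp_nat_mul]; ring_nf
  constructor
  · intro t ht
    rw [← ofReal_integral_eq_lintegral_ofReal (hintm t n le_rfl)
      (ae_of_all _ fun ω => (Real.exp_pos _).le)]
    exact ENNReal.ofReal_le_ofReal (hmgf t ht)
  · intro x hx
    set t0 : ℝ := x / (2 * c) with ht0def
    have ht0 : 0 < t0 := by positivity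
    have hn' : (0:ℝ) < n := by exact_mod_cast hn
    have hsub : {ω | (∑ i ∈ Finset.Icc 1 n, X i ω) / n > x} ⊆
        {ω | (n : ℝ) * x ≤ ∑ i ∈ Finset.Icc 1 n, X i ω} := by
      intro ω hω
      simp only [Set.mem_setOf_eq, gt_iff_lt] at *
      rw [lt_div_iff₀ hn'] at hω
      nlinarith
    have hch := measure_ge_le_exp_mul_mgf (μ := μ)
      (X := fun ω => ∑ i ∈ Finset.Icc 1 n, X i ω) ((n : ℝ) * x) ht0.le (hintm t0 n le_rfl)
    have hmgf' : mgf (fun ω => ∑ i ∈ Finset.Icc 1 n, X i ω) μ t0 ≤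
        Real.exp (n * c * t0 ^ 2) := hmgf t0 ht0
    calc μ {ω | (∑ i ∈ Finset.Icc 1 n, X i ω) / n > x}
        ≤ μ {ω | (n : ℝ) * x ≤ ∑ i ∈ Finset.Icc 1 n, X i ω} := measure_mono hsub
      _ ≤ ENNReal.ofReal (Real.exp (-(n * x ^ 2 / (4 * c)))) := by
          rw [ENNReal.le_ofReal_iff_toReal_le (measure_ne_top μ _) (Real.exp_pos _).le]
          calc (μ {ω | (n : ℝ) * x ≤ ∑ i ∈ Finset.Icc 1 n, X i ω}).toReal
              ≤ Real.exp (-t0 * ((n : ℝ) * x)) *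
                mgf (fun ω => ∑ i ∈ Finset.Icc 1 n, X i ω) μ t0 := hch
            _ ≤ Real.exp (-t0 * ((n : ℝ) * x)) * Real.exp (n * c * t0 ^ 2) :=
                mul_le_mul_of_nonneg_left hmgf' (Real.exp_pos _).le
            _ = Real.exp (-t0 * ((n : ℝ) * x) + n * c * t0 ^ 2) := (Real.exp_add _ _).symm
            _ = Real.exp (-(n * x ^ 2 / (4 * c))) := by
                congr 1
                rw [ht0def]
                field_simp
                ring


lemma part2 {Ω : Type*} {m0 : MeasurableSpace Ω} (μ : Measure Ω) (hprob : IsProbabilityMeasure μ)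
    (n : ℕ) (X : ℕ → Ω → ℝ) (c : ℝ) (hn : 1 ≤ n) (hc : 0 < c)
    (hmeas : ∀ i, Measurable (X i))
    (hindep : iIndepFun
      (fun i : {i : ℕ // i ∈ Finset.Icc 1 n} => X i) μ)
    (hident : ∀ i ∈ Finset.Icc 1 n, IdentDistrib (X i) (X 1) μ μ)
    (hdev : ∀ x : ℝ, 0 < x →
      μ {ω | (∑ i ∈ Finset.Icc 1 n, X i ω) / n > x} ≤
        ENNReal.ofReal (Real.exp (-(n * x ^ 2 / (4 * c)))))
    (R : ℝ) (hR : 0 < R) (hRa : R < 1 / (4 * c)) :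
    (∫⁻ ω, ENNReal.ofReal (Real.exp (R * (max (X 1 ω) 0) ^ 2)) ∂μ) ≤
      ENNReal.ofReal (1 + R / (1 / (4 * c) - R)) := by
  haveI := hprob
  haveI : Fintype {i : ℕ // i ∈ Finset.Icc 1 n} := FinsetCoe.fintype _
  set a : ℝ := 1 / (4 * c) with hadef
  have ha : 0 < a := by positivity
  have hn' : (0:ℝ) < n := by exact_mod_cast hn
  -- Step A: individual tail bound
  have htail : ∀ x : ℝ, 0 < x →
      μ {ω | x < X 1 ω} ≤ ENNReal.ofReal (Real.exp (-(x ^ 2 * a))) := by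
    intro x hx
    have hiff := (iIndepFun_iff_measure_inter_preimage_eq_mul.1 hindep) Finset.univ
      (sets := fun _ => Set.Ioi x) (fun i _ => measurableSet_Ioi)
    have hprodeq : ∀ i : {i : ℕ // i ∈ Finset.Icc 1 n},
        μ (X i ⁻¹' Set.Ioi x) = μ {ω | x < X 1 ω} := by
      intro i
      have h := (hident i i.2).measure_mem_eq (measurableSet_Ioi (a := x))
      simpa [Set.preimage, Set.mem_Ioi] using h
    have hcard : Fintype.card {i : ℕ // i ∈ Finset.Icc 1 n} = n := by
      rw [Fintype.card_coe, Nat.card_Icc]; omega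
    have hsubset : (⋂ i ∈ Finset.univ,
        (fun i : {i : ℕ // i ∈ Finset.Icc 1 n} => X i.1) i ⁻¹' Set.Ioi x)
        ⊆ {ω | (∑ i ∈ Finset.Icc 1 n, X i ω) / n > x} := by
      intro ω hω
      simp only [Set.mem_iInter, Set.mem_preimage, Set.mem_Ioi, Finset.mem_univ,
        forall_true_left] at hω
      have hne : (Finset.Icc 1 n).Nonempty := by
        refine ⟨1, ?_⟩; simp only [Finset.mem_Icc]; omega
      have hlt : ∑ _i ∈ Finset.Icc 1 n, x < ∑ i ∈ Finset.Icc 1 n, X i ω :=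
        Finset.sum_lt_sum_of_nonempty hne fun i hi => hω ⟨i, hi⟩
      rw [Finset.sum_const, Nat.card_Icc] at hlt
      have hsmul : (n + 1 - 1) • x = (n : ℝ) * x := by
        simp [nsmul_eq_mul]
      rw [hsmul] at hlt
      simp only [Set.mem_setOf_eq, gt_iff_lt]
      rw [lt_div_iff₀ hn']
      linarith
    have hpow : (μ {ω | x < X 1 ω}) ^ n ≤ (ENNReal.ofReal (Real.exp (-(x ^ 2 * a)))) ^ n := by
      calc (μ {ω | x < X 1 ω}) ^ n
          = ∏ i : {i : ℕ // i ∈ Finset.Icc 1 n}, μ (X i ⁻¹' Set.Ioi x) := by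
            rw [Finset.prod_congr rfl fun i _ => hprodeq i, Finset.prod_const,
              Finset.card_univ, hcard]
        _ = μ (⋂ i ∈ Finset.univ,
            (fun i : {i : ℕ // i ∈ Finset.Icc 1 n} => X i.1) i ⁻¹' Set.Ioi x) := hiff.symm
        _ ≤ μ {ω | (∑ i ∈ Finset.Icc 1 n, X i ω) / n > x} := measure_mono hsubset
        _ ≤ ENNReal.ofReal (Real.exp (-(n * x ^ 2 / (4 * c)))) := hdev x hx
        _ = (ENNReal.ofReal (Real.exp (-(x ^ 2 * a)))) ^ n := by
            have harg : -((n:ℝ) * x ^ 2 / (4 * c)) = (n:ℝ) * -(x ^ 2 * a) := by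
              rw [hadef]; field_simp
            rw [harg, Real.exp_nat_mul, ENNReal.ofReal_pow (Real.exp_pos _).le]
    by_contra hlt'
    push_neg at hlt'
    exact absurd hpow (not_le.2 (ENNReal.pow_lt_pow_left (by omega) hlt'))
  -- Step B: layer cake
  set Y : Ω → ℝ := fun ω => max (X 1 ω) 0 with hYdef
  have hYmeas : Measurable Y := (hmeas 1).max measurable_const
  have hfm : AEMeasurable (fun ω => Real.exp (R * Y ω ^ 2)) μ :=
    (Real.measurable_exp.comp (((hYmeas.pow_const 2).const_mul R))).aemeasurable
  rw [lintegral_eq_lintegral_meas_lt μ (ae_of_all _ fun ω => (Real.exp_pos _).le) hfm]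
  have hsplit : Set.Ioi (0:ℝ) = Set.Ioc 0 1 ∪ Set.Ioi 1 :=
    (Set.Ioc_union_Ioi_eq_Ioi zero_le_one).symm
  rw [hsplit, lintegral_union measurableSet_Ioi (Set.Ioc_disjoint_Ioi le_rfl)]
  have hvRa : (0:ℝ) < a - R := by linarith
  have piece1 : ∫⁻ t in Set.Ioc (0:ℝ) 1, μ {ω | t < Real.exp (R * Y ω ^ 2)} ≤ 1 := by
    calc ∫⁻ t in Set.Ioc (0:ℝ) 1, μ {ω | t < Real.exp (R * Y ω ^ 2)}
        ≤ ∫⁻ _ in Set.Ioc (0:ℝ) 1, 1 := lintegral_mono fun t => prob_le_one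
      _ = volume (Set.Ioc (0:ℝ) 1) := setLIntegral_one _
      _ = 1 := by rw [Real.volume_Ioc]; norm_num
  have hq : -(a / R) < -1 := by
    have h1 : (1:ℝ) < a / R := (one_lt_div hR).2 hRa
    linarith
  have piece2 : ∫⁻ t in Set.Ioi (1:ℝ), μ {ω | t < Real.exp (R * Y ω ^ 2)} ≤
      ENNReal.ofReal (R / (a - R)) := by
    calc ∫⁻ t in Set.Ioi (1:ℝ), μ {ω | t < Real.exp (R * Y ω ^ 2)}
        ≤ ∫⁻ t in Set.Ioi (1:ℝ), ENNReal.ofReal (t ^ (-(a / R))) := by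
          apply setLIntegral_mono' measurableSet_Ioi
          intro s hs1
          simp only [Set.mem_Ioi] at hs1
          have hs0 : (0:ℝ) < s := lt_trans zero_lt_one hs1
          have hlog : 0 < Real.log s := Real.log_pos hs1
          set q := Real.sqrt (Real.log s / R) with hqdef
          have hq0 : 0 < q := Real.sqrt_pos.2 (by positivity)
          have hsub2 : {ω | s < Real.exp (R * Y ω ^ 2)} ⊆ {ω | q < X 1 ω} := by
            intro ω hω
            simp only [Set.mem_setOf_eq] at hω ⊢
            have h2 : Real.log s < R * Y ω ^ 2 := (Real.log_lt_iff_lt_exp hs0).2 hω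
            have h3 : Real.log s / R < Y ω ^ 2 := by
              rw [div_lt_iff₀ hR]
              nlinarith
            have hYnn : (0:ℝ) ≤ Y ω := le_max_right _ _
            have hpos : 0 < Y ω ^ 2 := (div_pos hlog hR).trans h3
            have hY0 : 0 < Y ω := by
              rcases hYnn.lt_or_eq with h | h
              · exact h
              · exfalso; rw [← h] at hpos; simp at hpos
            have h4 : q < Y ω := (Real.sqrt_lt' hY0).2 h3
            have h4' : q < max (X 1 ω) 0 := h4
            rcases lt_max_iff.1 h4' with h | h
            · exact h
            · linarith
          calc μ {ω | s < Real.exp (R * Y ω ^ 2)}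
              ≤ μ {ω | q < X 1 ω} := measure_mono hsub2
            _ ≤ ENNReal.ofReal (Real.exp (-(q ^ 2 * a))) := htail q hq0
            _ = ENNReal.ofReal (s ^ (-(a / R))) := by
                rw [Real.rpow_def_of_pos hs0]
                congr 1
                rw [hqdef, Real.sq_sqrt (by positivity : (0:ℝ) ≤ Real.log s / R)]
                field_simp
      _ = ENNReal.ofReal (R / (a - R)) := by
          rw [← ofReal_integral_eq_lintegral_ofReal (integrableOn_Ioi_rpow_of_lt hq zero_lt_one)
            ((ae_restrict_iff' measurableSet_Ioi).2 (ae_of_all _ fun s hs =>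
              Real.rpow_nonneg (le_of_lt (lt_trans zero_lt_one hs)) _))]
          rw [integral_Ioi_rpow_of_lt hq zero_lt_one, Real.one_rpow]
          congr 1
          have hRne : R ≠ 0 := hR.ne'
          have key : -(a / R) + 1 = -((a - R) / R) := by field_simp; ring
          rw [key, neg_div_neg_eq, one_div_div]
  calc (∫⁻ t in Set.Ioc (0:ℝ) 1, μ {ω | t < Real.exp (R * Y ω ^ 2)}) +
        ∫⁻ t in Set.Ioi (1:ℝ), μ {ω | t < Real.exp (R * Y ω ^ 2)}
      ≤ 1 + ENNReal.ofReal (R / (a - R)) := add_le_add piece1 piece2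
    _ = ENNReal.ofReal (1 + R / (a - R)) := by
        rw [ENNReal.ofReal_add (by norm_num) (by positivity), ENNReal.ofReal_one]

end helpers

/-- Theorem 2.7 (Hoeffding-type inequality): under the conditional condition
`E[exp (R X_i²) | F_{i-1}] ≤ K` for supermartingale differences, sub-Gaussian Laplace
and deviation bounds hold with a constant `c` depending only on `R` and `K`; conversely,
for i.i.d. variables the Gaussian deviation bound implies an explicit exponential square
moment bound for the positive part of `X 1`. -/
theorem supermartingale_hoeffding_type_inequality :
    (∀ R K : ℝ, 0 < R → 0 < K →
      ∃ c : ℝ, 0 < c ∧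
        ∀ {Ω : Type*} {m0 : MeasurableSpace Ω} (μ : Measure Ω), IsProbabilityMeasure μ →
        ∀ (ℱ : Filtration ℕ m0) (n : ℕ) (X : ℕ → Ω → ℝ), 1 ≤ n →
          (∀ i ∈ Finset.Icc 1 n, StronglyMeasurable[ℱ i] (X i)) →
          (∀ i ∈ Finset.Icc 1 n, Integrable (X i) μ) →
          (∀ i ∈ Finset.Icc 1 n, ∀ᵐ ω ∂μ, (μ[X i|ℱ (i - 1)]) ω ≤ 0) →
          (∀ i ∈ Finset.Icc 1 n,
            Integrable (fun ω => Real.exp (R * (X i ω) ^ 2)) μ) →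
          (∀ i ∈ Finset.Icc 1 n,
            ∀ᵐ ω ∂μ, (μ[fun ω' => Real.exp (R * (X i ω') ^ 2)|ℱ (i - 1)]) ω ≤ K) →
          (∀ t : ℝ, 0 < t →
            (∫⁻ ω, ENNReal.ofReal (Real.exp (t * ∑ i ∈ Finset.Icc 1 n, X i ω)) ∂μ) ≤
              ENNReal.ofReal (Real.exp (n * c * t ^ 2))) ∧
          (∀ x : ℝ, 0 < x →
            μ {ω | (∑ i ∈ Finset.Icc 1 n, X i ω) / n > x} ≤
              ENNReal.ofReal (Real.exp (-(n * x ^ 2 / (4 * c)))))) ∧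
    (∀ {Ω : Type*} {m0 : MeasurableSpace Ω} (μ : Measure Ω), IsProbabilityMeasure μ →
      ∀ (n : ℕ) (X : ℕ → Ω → ℝ) (c : ℝ), 1 ≤ n → 0 < c →
        (∀ i, Measurable (X i)) →
        iIndepFun
          (fun i : {i : ℕ // i ∈ Finset.Icc 1 n} => X i) μ →
        (∀ i ∈ Finset.Icc 1 n, IdentDistrib (X i) (X 1) μ μ) →
        (∀ x : ℝ, 0 < x →
          μ {ω | (∑ i ∈ Finset.Icc 1 n, X i ω) / n > x} ≤
            ENNReal.ofReal (Real.exp (-(n * x ^ 2 / (4 * c))))) →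
        ∀ R : ℝ, 0 < R → R < 1 / (4 * c) →
          (∫⁻ ω, ENNReal.ofReal (Real.exp (R * (max (X 1 ω) 0) ^ 2)) ∂μ) ≤
            ENNReal.ofReal (1 + R / (1 / (4 * c) - R))) := by
  constructor
  · exact part1
  · intro Ω m0 μ hprob n X c hn hc hmeas hindep hident hdev R hR hRa
    exact part2 μ hprob n X c hn hc hmeas hindep hident hdev R hR hRa
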